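/- arXiv:1203.3086 — 3 statements merged into one kernel-verified Lean document; each statement's English description precedes it below -/
import Mathlib

section
/- (Fefferman–de la Llave identity) For all x, y ∈ ℝ³ with x ≠ y one has 1/‖x−y‖ = ∫₀^∞ (1/(π r⁵)) ∫_{ℝ³} χ_{B(z,r)}(x) · χ_{B(z,r)}(y) dz dr, where the inner integral is over z ∈ ℝ³ with respect to Lebesgue measure. -/
open scoped Real

open MeasureTheory Set Metric Real

section Helpers

lemma disk_vol (c : ℝ) :
    volume {u : Fin 2 → ℝ | u 0 ^ 2 + u 1 ^ 2 ≤ c} = ENNReal.ofReal (π * c) := by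
  rcases lt_or_ge c 0 with hc | hc
  · have : {u : Fin 2 → ℝ | u 0 ^ 2 + u 1 ^ 2 ≤ c} = ∅ := by
      ext u; simp only [Set.mem_setOf_eq, Set.mem_empty_iff_false, iff_false]
      intro h; nlinarith [sq_nonneg (u 0), sq_nonneg (u 1)]
    rw [this, measure_empty, Eq.comm, ENNReal.ofReal_eq_zero]
    nlinarith [Real.pi_pos]
  · have hset : {u : Fin 2 → ℝ | u 0 ^ 2 + u 1 ^ 2 ≤ c} =
        (WithLp.toLp 2 : (Fin 2 → ℝ) → EuclideanSpace ℝ (Fin 2)) ⁻¹'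
          (closedBall (0 : EuclideanSpace ℝ (Fin 2)) (Real.sqrt c)) := by
      ext u
      simp only [Set.mem_setOf_eq, Set.mem_preimage, Metric.mem_closedBall, dist_zero_right]
      rw [EuclideanSpace.norm_eq]
      have : ∀ i, (WithLp.toLp 2 : (Fin 2 → ℝ) → EuclideanSpace ℝ (Fin 2)) u i = u i := fun i => rfl
      simp only [this, PiLp.toLp_apply, Fin.sum_univ_two]
      rw [← Real.sqrt_le_sqrt_iff (by positivity)]
      simp [Real.norm_eq_abs, sq_abs]
    rw [hset, (PiLp.volume_preserving_toLp (Fin 2)).measure_preimage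
      measurableSet_closedBall.nullMeasurableSet,
      EuclideanSpace.volume_closedBall]
    simp only [Fintype.card_fin]
    rw [show ((2:ℕ):ℝ)/2 + 1 = 2 by norm_num]
    rw [Real.Gamma_two]
    rw [← ENNReal.ofReal_pow (Real.sqrt_nonneg c), Real.sq_sqrt hc,
      ← ENNReal.ofReal_mul hc]
    rw [sq, Real.mul_self_sqrt Real.pi_pos.le, mul_comm]
    norm_num

lemma move_balls (x y : EuclideanSpace ℝ (Fin 3)) (r : ℝ) :
    volume (closedBall x r ∩ closedBall y r) =
    volume (closedBall (0 : EuclideanSpace ℝ (Fin 3)) r ∩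
      closedBall (EuclideanSpace.single 0 (dist x y)) r) := by
  set d := dist x y with hd
  set c : EuclideanSpace ℝ (Fin 3) := EuclideanSpace.single 0 d with hc
  have hnc : ‖c‖ = d := by
    rw [hc, EuclideanSpace.norm_single, Real.norm_eq_abs, abs_of_nonneg dist_nonneg]
  have hnyx : ‖y - x‖ = ‖c‖ := by rw [hnc, hd, dist_comm, dist_eq_norm]
  set e := Submodule.reflection (ℝ ∙ ((y - x) - c))ᗮ with he
  have hec : e (y - x) = c := Submodule.reflection_sub hnyx
  have hmp : MeasurePreserving (fun z : EuclideanSpace ℝ (Fin 3) => e (z - x)) volume volume :=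
    e.measurePreserving.comp (measurePreserving_sub_right volume x)
  have hset : closedBall x r ∩ closedBall y r =
      (fun z : EuclideanSpace ℝ (Fin 3) => e (z - x)) ⁻¹' (closedBall 0 r ∩ closedBall c r) := by
    ext z
    simp only [Set.mem_inter_iff, Set.mem_preimage, Metric.mem_closedBall, dist_eq_norm,
      sub_zero]
    rw [← hec, ← map_sub, e.norm_map, e.norm_map]
    constructor
    · rintro ⟨h1, h2⟩; exact ⟨h1, by simpa [sub_sub_sub_cancel_right] using h2⟩
    · rintro ⟨h1, h2⟩; exact ⟨h1, by simpa [sub_sub_sub_cancel_right] using h2⟩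
  rw [hset, hmp.measure_preimage
    ((measurableSet_closedBall.inter measurableSet_closedBall).nullMeasurableSet)]

lemma slice_vol (d r : ℝ) (hd : 0 ≤ d) (hr : 0 < r) :
    volume (closedBall (0 : EuclideanSpace ℝ (Fin 3)) r ∩
      closedBall (EuclideanSpace.single 0 d) r) =
    ∫⁻ t : ℝ, ENNReal.ofReal (π * min (r^2 - t^2) (r^2 - (t-d)^2)) := by
  -- transfer to Pi
  set S : Set (Fin 3 → ℝ) :=
    {f | f 0 ^ 2 + f 1 ^ 2 + f 2 ^ 2 ≤ r ^ 2 ∧ (f 0 - d) ^ 2 + f 1 ^ 2 + f 2 ^ 2 ≤ r ^ 2} with hS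
  have h1 : (WithLp.toLp 2 : (Fin 3 → ℝ) → EuclideanSpace ℝ (Fin 3)) ⁻¹'
      (closedBall (0 : EuclideanSpace ℝ (Fin 3)) r ∩
        closedBall (EuclideanSpace.single 0 d) r) = S := by
    ext f
    have hcoord : ∀ i, (WithLp.toLp 2 : (Fin 3 → ℝ) → EuclideanSpace ℝ (Fin 3)) f i = f i := fun _ => rfl
    simp only [Set.mem_preimage, Set.mem_inter_iff, Metric.mem_closedBall, dist_zero_right,
      dist_eq_norm, hS, Set.mem_setOf_eq]
    rw [EuclideanSpace.norm_eq, EuclideanSpace.norm_eq]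
    simp only [Fin.sum_univ_three, PiLp.sub_apply, PiLp.zero_apply, hcoord,
      EuclideanSpace.single_apply, Real.norm_eq_abs, sq_abs, sub_zero,
      show ((1:Fin 3) = 0) = False by simp, show ((2:Fin 3) = 0) = False by simp,
      if_true, if_false, eq_self_iff_true]
    have key : ∀ A : ℝ, 0 ≤ A → (Real.sqrt A ≤ r ↔ A ≤ r ^ 2) := by
      intro A hA
      constructor
      · intro h; nlinarith [Real.sq_sqrt hA, Real.sqrt_nonneg A]
      · intro h; rw [← Real.sqrt_sq hr.le]; exact Real.sqrt_le_sqrt h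
    rw [key _ (by positivity), key _ (by positivity)]
  rw [← (PiLp.volume_preserving_toLp (Fin 3)).measure_preimage
    ((measurableSet_closedBall.inter measurableSet_closedBall)).nullMeasurableSet, h1]
  -- slice off first coordinate
  set T : Set (ℝ × (Fin 2 → ℝ)) :=
    {p | p.1 ^ 2 + p.2 0 ^ 2 + p.2 1 ^ 2 ≤ r ^ 2 ∧
         (p.1 - d) ^ 2 + p.2 0 ^ 2 + p.2 1 ^ 2 ≤ r ^ 2} with hT
  have hA : Measurable fun p : ℝ × (Fin 2 → ℝ) => p.1 ^ 2 + p.2 0 ^ 2 + p.2 1 ^ 2 := by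
    fun_prop
  have hB : Measurable fun p : ℝ × (Fin 2 → ℝ) => (p.1 - d) ^ 2 + p.2 0 ^ 2 + p.2 1 ^ 2 := by
    fun_prop
  have hTm : MeasurableSet T :=
    (measurableSet_le hA measurable_const).inter (measurableSet_le hB measurable_const)
  have h2 : (MeasurableEquiv.piFinSuccAbove (fun _ : Fin 3 => ℝ) 0) ⁻¹' T = S := by
    ext f
    simp only [Set.mem_preimage, MeasurableEquiv.piFinSuccAbove_apply, hT, hS, Set.mem_setOf_eq]
    simp [Fin.zero_succAbove, Fin.succ_zero_eq_one, Fin.succ_one_eq_two, Fin.tail]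
  rw [← h2, (volume_preserving_piFinSuccAbove (fun _ : Fin 3 => ℝ) 0).measure_preimage
    hTm.nullMeasurableSet]
  rw [Measure.volume_eq_prod, Measure.prod_apply hTm]
  congr 1
  ext t
  have hsec : Prod.mk t ⁻¹' T = {u : Fin 2 → ℝ | u 0 ^ 2 + u 1 ^ 2 ≤
      min (r ^ 2 - t ^ 2) (r ^ 2 - (t - d) ^ 2)} := by
    ext u
    simp only [Set.mem_preimage, hT, Set.mem_setOf_eq, le_min_iff]
    constructor <;> intro h <;> exact ⟨by linarith [h.1], by linarith [h.2]⟩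
  rw [hsec, disk_vol]

lemma poly_int (r a b : ℝ) : ∫ t in a..b, π * (r ^ 2 - t ^ 2) =
    π * (r ^ 2 * (b - a) - (b ^ 3 - a ^ 3) / 3) := by
  rw [intervalIntegral.integral_const_mul]
  congr 1
  rw [intervalIntegral.integral_sub intervalIntegrable_const (intervalIntegral.intervalIntegrable_pow 2)]
  simp [integral_pow]
  ring

lemma lens_integral (d r : ℝ) (hd : 0 ≤ d) (hdr : d ≤ 2 * r) (hr : 0 < r) :
    (∫⁻ t : ℝ, ENNReal.ofReal (π * min (r ^ 2 - t ^ 2) (r ^ 2 - (t - d) ^ 2))) =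
    ENNReal.ofReal (π / 12 * (2 * r - d) ^ 2 * (4 * r + d)) := by
  have hdr2 : d / 2 ≤ r := by linarith
  set g : ℝ → ℝ := fun t => π * max (min (r ^ 2 - t ^ 2) (r ^ 2 - (t - d) ^ 2)) 0 with hg
  have hpt : ∀ t : ℝ, ENNReal.ofReal (π * min (r ^ 2 - t ^ 2) (r ^ 2 - (t - d) ^ 2))
      = ENNReal.ofReal (g t) := by
    intro t
    rcases le_or_gt 0 (min (r ^ 2 - t ^ 2) (r ^ 2 - (t - d) ^ 2)) with h | h
    · rw [hg]; simp only [max_eq_left h]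
    · rw [ENNReal.ofReal_of_nonpos (by nlinarith [Real.pi_pos]), hg]
      simp only [max_eq_right h.le, mul_zero, ENNReal.ofReal_zero]
  simp_rw [hpt]
  have hgc : Continuous g := by
    apply continuous_const.mul
    exact ((continuous_const.sub (continuous_id.pow 2)).min
      (continuous_const.sub ((continuous_id.sub continuous_const).pow 2))).max continuous_const
  have hgs : HasCompactSupport g := by
    apply HasCompactSupport.intro (isCompact_Icc (a := -r) (b := r))
    intro t ht
    simp only [Set.mem_Icc, not_and_or, not_le] at ht
    have h2 : r ^ 2 - t ^ 2 < 0 := by rcases ht with h | h <;> nlinarith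
    rw [hg]
    have : min (r ^ 2 - t ^ 2) (r ^ 2 - (t - d) ^ 2) ≤ r ^ 2 - t ^ 2 := min_le_left _ _
    simp only [max_eq_right (by linarith : min (r ^ 2 - t ^ 2) (r ^ 2 - (t - d) ^ 2) ≤ 0), mul_zero]
  have hgi : Integrable g := hgc.integrable_of_hasCompactSupport hgs
  rw [← MeasureTheory.ofReal_integral_eq_lintegral_ofReal hgi
    (Filter.Eventually.of_forall fun t => by
      exact mul_nonneg Real.pi_pos.le (le_max_right _ _))]
  congr 1
  -- split the real integral
  rw [← setIntegral_univ (f := g), ← Set.Iic_union_Ioi (a := d / 2),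
    setIntegral_union (Set.Iic_disjoint_Ioi le_rfl) measurableSet_Ioi
      hgi.integrableOn hgi.integrableOn]
  have hIoi : ∫ t in Ioi (d / 2), g t = ∫ t in Ioi (d / 2), π * max (r ^ 2 - t ^ 2) 0 := by
    apply setIntegral_congr_fun measurableSet_Ioi
    intro t ht
    simp only [Set.mem_Ioi] at ht
    rw [hg]
    simp only [min_eq_left (by nlinarith : r ^ 2 - t ^ 2 ≤ r ^ 2 - (t - d) ^ 2)]
  have hIic : ∫ t in Iic (d / 2), g t = ∫ t in Iic (d / 2), π * max (r ^ 2 - (t - d) ^ 2) 0 := by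
    apply setIntegral_congr_fun measurableSet_Iic
    intro t ht
    simp only [Set.mem_Iic] at ht
    rw [hg]
    simp only [min_eq_right (by nlinarith : r ^ 2 - (t - d) ^ 2 ≤ r ^ 2 - t ^ 2)]
  rw [hIoi, hIic]
  -- the two pieces
  have hcont1 : Continuous fun t : ℝ => π * max (r ^ 2 - t ^ 2) 0 :=
    continuous_const.mul ((continuous_const.sub (continuous_id.pow 2)).max continuous_const)
  have hcs1 : HasCompactSupport fun t : ℝ => π * max (r ^ 2 - t ^ 2) 0 := by
    apply HasCompactSupport.intro (isCompact_Icc (a := -r) (b := r))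
    intro t ht
    simp only [Set.mem_Icc, not_and_or, not_le] at ht
    have h2 : r ^ 2 - t ^ 2 < 0 := by rcases ht with h | h <;> nlinarith
    simp [max_eq_right h2.le]
  have hint1 : Integrable fun t : ℝ => π * max (r ^ 2 - t ^ 2) 0 :=
    hcont1.integrable_of_hasCompactSupport hcs1
  have hcont2 : Continuous fun t : ℝ => π * max (r ^ 2 - (t - d) ^ 2) 0 :=
    continuous_const.mul ((continuous_const.sub
      ((continuous_id.sub continuous_const).pow 2)).max continuous_const)
  have hcs2 : HasCompactSupport fun t : ℝ => π * max (r ^ 2 - (t - d) ^ 2) 0 := by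
    apply HasCompactSupport.intro (isCompact_Icc (a := d - r) (b := d + r))
    intro t ht
    simp only [Set.mem_Icc, not_and_or, not_le] at ht
    have h2 : r ^ 2 - (t - d) ^ 2 < 0 := by rcases ht with h | h <;> nlinarith
    simp [max_eq_right h2.le]
  have hint2 : Integrable fun t : ℝ => π * max (r ^ 2 - (t - d) ^ 2) 0 :=
    hcont2.integrable_of_hasCompactSupport hcs2
  have part1 : ∫ t in Ioi (d / 2), π * max (r ^ 2 - t ^ 2) 0
      = π * (r ^ 2 * (r - d / 2) - (r ^ 3 - (d / 2) ^ 3) / 3) := by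
    rw [← Set.Ioc_union_Ioi_eq_Ioi hdr2,
      setIntegral_union (Set.Ioc_disjoint_Ioi le_rfl) measurableSet_Ioi
        hint1.integrableOn hint1.integrableOn]
    have e1 : ∫ t in Ioc (d / 2) r, π * max (r ^ 2 - t ^ 2) 0
        = ∫ t in Ioc (d / 2) r, π * (r ^ 2 - t ^ 2) := by
      apply setIntegral_congr_fun measurableSet_Ioc
      intro t ht
      simp only [Set.mem_Ioc] at ht
      beta_reduce
      rw [max_eq_left (by nlinarith [ht.1, ht.2] : (0:ℝ) ≤ r ^ 2 - t ^ 2)]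
    have e2 : ∫ t in Ioi r, π * max (r ^ 2 - t ^ 2) 0 = 0 := by
      rw [setIntegral_congr_fun measurableSet_Ioi
        (fun t ht => by
          simp only [Set.mem_Ioi] at ht
          beta_reduce
          rw [max_eq_right (by nlinarith : r ^ 2 - t ^ 2 ≤ 0), mul_zero]),
        integral_zero]
    rw [e1, e2, add_zero, ← intervalIntegral.integral_of_le hdr2, poly_int]
  have part2 : ∫ t in Iic (d / 2), π * max (r ^ 2 - (t - d) ^ 2) 0
      = π * (r ^ 2 * (r - d / 2) - (r ^ 3 - (d / 2) ^ 3) / 3) := by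
    rw [← Set.Iio_union_Icc_eq_Iic (by linarith : d - r ≤ d / 2),
      setIntegral_union ((Set.Iio_disjoint_Ici le_rfl).mono_right Set.Icc_subset_Ici_self)
        measurableSet_Icc
        hint2.integrableOn hint2.integrableOn]
    have e1 : ∫ t in Iio (d - r), π * max (r ^ 2 - (t - d) ^ 2) 0 = 0 := by
      rw [setIntegral_congr_fun measurableSet_Iio
        (fun t ht => by
          simp only [Set.mem_Iio] at ht
          beta_reduce
          rw [max_eq_right (by nlinarith : r ^ 2 - (t - d) ^ 2 ≤ 0), mul_zero]),
        integral_zero]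
    have e2 : ∫ t in Icc (d - r) (d / 2), π * max (r ^ 2 - (t - d) ^ 2) 0
        = ∫ t in Icc (d - r) (d / 2), π * (r ^ 2 - (t - d) ^ 2) := by
      apply setIntegral_congr_fun measurableSet_Icc
      intro t ht
      simp only [Set.mem_Icc] at ht
      beta_reduce
      rw [max_eq_left (by nlinarith [ht.1, ht.2] : (0:ℝ) ≤ r ^ 2 - (t - d) ^ 2)]
    rw [e1, e2, zero_add, MeasureTheory.integral_Icc_eq_integral_Ioc,
      ← intervalIntegral.integral_of_le (by linarith : d - r ≤ d / 2),
      intervalIntegral.integral_comp_sub_right (fun u => π * (r ^ 2 - u ^ 2)) d, poly_int]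
    ring
  rw [part1, part2]
  ring

lemma inner_int (x y : EuclideanSpace ℝ (Fin 3)) (r : ℝ) :
    (∫ z : EuclideanSpace ℝ (Fin 3),
        (Metric.closedBall z r).indicator (fun _ => (1 : ℝ)) x *
        (Metric.closedBall z r).indicator (fun _ => (1 : ℝ)) y)
    = (volume (closedBall x r ∩ closedBall y r)).toReal := by
  have h : ∀ z : EuclideanSpace ℝ (Fin 3),
      (Metric.closedBall z r).indicator (fun _ => (1 : ℝ)) x *
      (Metric.closedBall z r).indicator (fun _ => (1 : ℝ)) y
      = (closedBall x r ∩ closedBall y r).indicator (fun _ => (1:ℝ)) z := by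
    intro z
    classical
    rw [Set.indicator_apply, Set.indicator_apply, Set.indicator_apply]
    simp only [Metric.mem_closedBall, Set.mem_inter_iff, dist_comm x z, dist_comm y z]
    by_cases h1 : dist z x ≤ r <;> by_cases h2 : dist z y ≤ r <;> simp [h1, h2]
  simp_rw [h]
  exact MeasureTheory.integral_indicator_one (s := closedBall x r ∩ closedBall y r) (measurableSet_closedBall.inter measurableSet_closedBall)

lemma ball_inter_vol (x y : EuclideanSpace ℝ (Fin 3)) (r : ℝ) (hr : 0 < r)
    (hdr : dist x y ≤ 2 * r) :
    volume (closedBall x r ∩ closedBall y r) =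
    ENNReal.ofReal (π / 12 * (2 * r - dist x y) ^ 2 * (4 * r + dist x y)) := by
  rw [move_balls, slice_vol _ _ dist_nonneg hr, lens_integral _ _ dist_nonneg hdr hr]


end Helpers

/-- The Fefferman--de la Llave identity: for `x ≠ y` in `ℝ³`,
`1/‖x−y‖ = ∫₀^∞ dr/(π r⁵) ∫_{ℝ³} χ_{B(z,r)}(x) χ_{B(z,r)}(y) dz`. -/
theorem fefferman_de_la_llave (x y : EuclideanSpace ℝ (Fin 3)) (hxy : x ≠ y) :
    1 / ‖x - y‖ =
      ∫ r in Set.Ioi (0 : ℝ),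
        (1 / (Real.pi * r ^ 5)) *
          ∫ z : EuclideanSpace ℝ (Fin 3),
            (Metric.closedBall z r).indicator (fun _ => (1 : ℝ)) x *
            (Metric.closedBall z r).indicator (fun _ => (1 : ℝ)) y := by
  have hd0 : 0 < dist x y := dist_pos.mpr hxy
  set d : ℝ := dist x y with hdd
  have hd20 : 0 < d / 2 := half_pos hd0
  simp_rw [inner_int x y]
  set f : ℝ → ℝ := fun r =>
    (1 / (π * r ^ 5)) * (volume (closedBall x r ∩ closedBall y r)).toReal with hf
  have key1 : EqOn f 0 (Ioc 0 (d / 2)) := by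
    intro r hr
    simp only [Set.mem_Ioc] at hr
    have : volume (closedBall x r ∩ closedBall y r) = 0 := by
      rcases lt_or_eq_of_le hr.2 with h | h
      · have hdisj : Disjoint (closedBall x r) (closedBall y r) :=
          closedBall_disjoint_closedBall (by rw [← hdd]; linarith)
        rw [hdisj.inter_eq, measure_empty]
      · rw [ball_inter_vol x y r hr.1 (by rw [← hdd]; linarith), ← hdd,
          show 2 * r - d = 0 by rw [h]; ring]
        simp
    rw [hf]
    simp [this]
  have key2 : EqOn f (fun r => (4/3) * r ^ (-(2:ℕ):ℝ) - d * r ^ (-(3:ℕ):ℝ)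
      + (d ^ 3 / 12) * r ^ (-(5:ℕ):ℝ)) (Ioi (d / 2)) := by
    intro r hr
    simp only [Set.mem_Ioi] at hr
    have hr0 : 0 < r := lt_trans hd20 hr
    have hvol := ball_inter_vol x y r hr0 (by rw [← hdd]; linarith)
    rw [hf]
    beta_reduce
    rw [hvol, ← hdd, ENNReal.toReal_ofReal (by positivity)]
    have hp : ∀ n : ℕ, r ^ (-(n:ℕ):ℝ) = (r ^ n)⁻¹ := by
      intro n
      rw [Real.rpow_neg hr0.le, Real.rpow_natCast]
    rw [hp 2, hp 3, hp 5]
    have hπ := Real.pi_ne_zero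
    field_simp
    ring
  have int2 : IntegrableOn (fun r : ℝ => (4/3) * r ^ (-(2:ℕ):ℝ) - d * r ^ (-(3:ℕ):ℝ)
      + (d ^ 3 / 12) * r ^ (-(5:ℕ):ℝ)) (Ioi (d / 2)) := by
    have i2 := integrableOn_Ioi_rpow_of_lt (by norm_num : (-(2:ℕ):ℝ) < -1) hd20
    have i3 := integrableOn_Ioi_rpow_of_lt (by norm_num : (-(3:ℕ):ℝ) < -1) hd20
    have i5 := integrableOn_Ioi_rpow_of_lt (by norm_num : (-(5:ℕ):ℝ) < -1) hd20
    exact ((i2.const_mul _).sub (i3.const_mul d)).add (i5.const_mul _)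
  rw [← Set.Ioc_union_Ioi_eq_Ioi hd20.le,
    setIntegral_union (Set.Ioc_disjoint_Ioi le_rfl) measurableSet_Ioi
      (integrableOn_zero.congr_fun (fun r hr => (key1 hr).symm) measurableSet_Ioc)
      (int2.congr_fun (fun r hr => (key2 hr).symm) measurableSet_Ioi),
    setIntegral_congr_fun measurableSet_Ioc key1,
    setIntegral_congr_fun measurableSet_Ioi key2]
  simp only [Pi.zero_apply, integral_zero, zero_add]
  have i2 := integrableOn_Ioi_rpow_of_lt (by norm_num : (-(2:ℕ):ℝ) < -1) hd20
  have i3 := integrableOn_Ioi_rpow_of_lt (by norm_num : (-(3:ℕ):ℝ) < -1) hd20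
  have i5 := integrableOn_Ioi_rpow_of_lt (by norm_num : (-(5:ℕ):ℝ) < -1) hd20
  have h1 : IntegrableOn (fun r : ℝ => (4/3) * r ^ (-(2:ℕ):ℝ) - d * r ^ (-(3:ℕ):ℝ))
      (Ioi (d/2)) := (i2.const_mul _).sub (i3.const_mul d)
  have h2 : IntegrableOn (fun r : ℝ => (d ^ 3 / 12) * r ^ (-(5:ℕ):ℝ)) (Ioi (d/2)) :=
    i5.const_mul _
  rw [integral_add h1 h2,
    integral_sub (i2.const_mul _) (i3.const_mul d),
    integral_const_mul, integral_const_mul, integral_const_mul,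
    integral_Ioi_rpow_of_lt (by norm_num) hd20,
    integral_Ioi_rpow_of_lt (by norm_num) hd20,
    integral_Ioi_rpow_of_lt (by norm_num) hd20,
    show ((-(2:ℕ):ℝ) + 1) = -((1:ℕ):ℝ) by push_cast; ring,
    show ((-(3:ℕ):ℝ) + 1) = -((2:ℕ):ℝ) by push_cast; ring,
    show ((-(5:ℕ):ℝ) + 1) = -((4:ℕ):ℝ) by push_cast; ring]
  have hp : ∀ n : ℕ, (d/2) ^ (-(n:ℕ):ℝ) = ((d/2) ^ n)⁻¹ := by
    intro n
    rw [Real.rpow_neg hd20.le, Real.rpow_natCast]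
  rw [hp 1, hp 2, hp 4]
  norm_num
  rw [show ‖x - y‖ = d by rw [hdd, dist_eq_norm]]
  have hd' : d ≠ 0 := hd0.ne'
  field_simp
  ring
end

section
/- Let X be an orthogonal projection on ℋ, let P, P^⊥ be the spectral projections of γ for eigenvalues > 1/2 and ≤ 1/2, and suppose (γ,Γ) is admissible and fulfills the P-condition. Then |tr_{ℋ⊗ℋ}((P^⊥XP⊗PXP^⊥)Γ)| ≤ tr_{ℋ⊗ℋ}((PXP⊗P^⊥XP^⊥)Γ). -/
open scoped ComplexOrder
open ContinuousLinearMap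

noncomputable section

/-- The trace of an operator computed relative to a Hilbert basis. For trace-class
operators this is the (basis-independent) trace. -/
def trB {H : Type*} [NormedAddCommGroup H] [InnerProductSpace ℂ H] {ι : Type*}
    (b : HilbertBasis ι ℂ H) (T : H →L[ℂ] H) : ℂ :=
  ∑' i, (inner ℂ (b i) (T (b i)) : ℂ)

/-- `T` is trace class: the sum of the diagonal matrix elements of `|T| = √(T*T)`
relative to the Hilbert basis `b` converges. -/
def IsTraceClass {H : Type*} [NormedAddCommGroup H] [InnerProductSpace ℂ H]
    [CompleteSpace H] {ι : Type*} (b : HilbertBasis ι ℂ H) (T : H →L[ℂ] H) : Prop :=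
  Summable fun i => (inner ℂ (b i) (CFC.sqrt (adjoint T * T) (b i)) : ℂ)

/-- A Hilbert-space tensor product structure: `H2` plays the role of the Hilbert tensor
product `H ⊗ H`, `tmul` is the (bilinear) elementary tensor map, `map A B` is the
operator `A ⊗ B`, and `ex` is the exchange operator (the unitary with `Ex (f⊗g) = g⊗f`). -/
structure HilbertTensor (H : Type*) (H2 : Type*)
    [NormedAddCommGroup H] [InnerProductSpace ℂ H] [CompleteSpace H]
    [NormedAddCommGroup H2] [InnerProductSpace ℂ H2] [CompleteSpace H2] where
  tmul : H →ₗ[ℂ] H →ₗ[ℂ] H2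
  inner_tmul : ∀ f g f' g',
    (inner ℂ (tmul f g) (tmul f' g') : ℂ) = (inner ℂ f f' : ℂ) * (inner ℂ g g' : ℂ)
  dense_span : Dense (↑(Submodule.span ℂ (Set.range fun p : H × H => tmul p.1 p.2)) : Set H2)
  map : (H →L[ℂ] H) → (H →L[ℂ] H) → (H2 →L[ℂ] H2)
  map_tmul : ∀ A B f g, map A B (tmul f g) = tmul (A f) (B g)
  ex : H2 →L[ℂ] H2
  ex_tmul : ∀ f g, ex (tmul f g) = tmul g f

section Helpers

local notation "⟪" x ", " y "⟫" => @inner ℂ _ _ x y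

variable {E F : Type*} [NormedAddCommGroup E] [InnerProductSpace ℂ E] [CompleteSpace E]
  [NormedAddCommGroup F] [InnerProductSpace ℂ F] [CompleteSpace F]

lemma myext_zero {G : Type*} [NormedAddCommGroup G] [NormedSpace ℂ G]
    {s : Set E} (hs : Dense (↑(Submodule.span ℂ s) : Set E))
    (f : E →L[ℂ] G) (h : ∀ x ∈ s, f x = 0) (x : E) : f x = 0 := by
  have hker : (Submodule.span ℂ s : Submodule ℂ E) ≤ f.ker :=
    Submodule.span_le.2 fun y hy => h y hy
  have hcl : (Set.univ : Set E) ⊆ (f.ker : Set E) := by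
    rw [← hs.closure_eq]
    calc closure (↑(Submodule.span ℂ s) : Set E)
        ⊆ closure (f.ker : Set E) := closure_mono hker
      _ = (f.ker : Set E) := (ContinuousLinearMap.isClosed_ker f).closure_eq
  exact hcl (Set.mem_univ x)

lemma myext_op {G : Type*} [NormedAddCommGroup G] [NormedSpace ℂ G]
    {s : Set E} (hs : Dense (↑(Submodule.span ℂ s) : Set E))
    (A B : E →L[ℂ] G) (h : ∀ x ∈ s, A x = B x) : A = B := by
  ext x
  have := myext_zero hs (A - B) (fun y hy => by simp [ContinuousLinearMap.sub_apply, h y hy]) x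
  simpa [ContinuousLinearMap.sub_apply, sub_eq_zero] using this

lemma myext_inner {s : Set E} (hs : Dense (↑(Submodule.span ℂ s) : Set E))
    {v w : E} (h : ∀ x ∈ s, ⟪x, v⟫ = ⟪x, w⟫) : v = w := by
  have h0 : ∀ x ∈ s, (innerSL ℂ (v - w)) x = 0 := by
    intro x hx
    have h1 : ⟪x, v - w⟫ = 0 := by rw [inner_sub_right, h x hx, sub_self]
    have h2 : ⟪v - w, x⟫ = 0 := by rw [← inner_conj_symm, h1, map_zero]
    rw [innerSL_apply_apply]
    exact h2
  have h3 := myext_zero hs (innerSL ℂ (v - w)) h0 (v - w)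
  rw [innerSL_apply_apply] at h3
  exact sub_eq_zero.mp (inner_self_eq_zero.mp h3)

variable {H H2 : Type*}
    [NormedAddCommGroup H] [InnerProductSpace ℂ H] [CompleteSpace H]
    [NormedAddCommGroup H2] [InnerProductSpace ℂ H2] [CompleteSpace H2]
    (T : HilbertTensor H H2)

lemma T_op_ext {A B : H2 →L[ℂ] H2} (h : ∀ f g, A (T.tmul f g) = B (T.tmul f g)) : A = B :=
  myext_op T.dense_span A B (by rintro x ⟨⟨f, g⟩, rfl⟩; exact h f g)

lemma T_vec_ext {v w : H2} (h : ∀ f g, ⟪T.tmul f g, v⟫ = ⟪T.tmul f g, w⟫) : v = w :=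
  myext_inner T.dense_span (by rintro x ⟨⟨f, g⟩, rfl⟩; exact h f g)

lemma T_adjoint_map (A B : H →L[ℂ] H) :
    adjoint (T.map A B) = T.map (adjoint A) (adjoint B) := by
  apply T_op_ext T
  intro f g
  apply T_vec_ext T
  intro f' g'
  rw [adjoint_inner_right, T.map_tmul, T.map_tmul, T.inner_tmul, T.inner_tmul,
      adjoint_inner_right, adjoint_inner_right]

lemma T_map_mul (A B A' B' : H →L[ℂ] H) :
    T.map A B * T.map A' B' = T.map (A * A') (B * B') := by
  apply T_op_ext T
  intro f g
  simp only [ContinuousLinearMap.mul_apply, T.map_tmul]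

lemma T_adjoint_ex : adjoint T.ex = T.ex := by
  apply T_op_ext T
  intro f g
  apply T_vec_ext T
  intro f' g'
  rw [adjoint_inner_right, T.ex_tmul, T.ex_tmul, T.inner_tmul, T.inner_tmul, mul_comm]

lemma T_ex_ex : T.ex * T.ex = 1 := by
  apply T_op_ext T
  intro f g
  simp only [ContinuousLinearMap.mul_apply, T.ex_tmul, ContinuousLinearMap.one_apply]

lemma T_ex_inner (u : H2) : ⟪T.ex u, T.ex u⟫ = ⟪u, u⟫ := by
  have h := adjoint_inner_left T.ex u (T.ex u)
  rw [T_adjoint_ex T] at h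
  have h2 : T.ex (T.ex u) = u := by
    have := DFunLike.congr_fun (T_ex_ex T) u
    simpa [ContinuousLinearMap.mul_apply] using this
  rw [h2] at h
  exact h.symm

lemma T_ex_norm (u : H2) : ‖T.ex u‖ = ‖u‖ := by
  have h := T_ex_inner T u
  rw [inner_self_eq_norm_sq_to_K, inner_self_eq_norm_sq_to_K] at h
  have h2 : ‖T.ex u‖ ^ 2 = ‖u‖ ^ 2 := by exact_mod_cast h
  rw [← Real.sqrt_sq (norm_nonneg (T.ex u)), ← Real.sqrt_sq (norm_nonneg u), h2]

lemma T_ex_map (A B : H →L[ℂ] H) : T.ex * T.map A B * T.ex = T.map B A := by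
  apply T_op_ext T
  intro f g
  simp only [ContinuousLinearMap.mul_apply, T.ex_tmul, T.map_tmul]

lemma parseval_sq (e2 : HilbertBasis ℕ ℂ H2) (u : H2) :
    Summable (fun i => ‖⟪e2 i, u⟫‖ ^ 2) ∧ (∑' i, ‖⟪e2 i, u⟫‖ ^ 2) = ‖u‖ ^ 2 := by
  have h := e2.hasSum_inner_mul_inner u u
  have heq : (fun i => ⟪u, e2 i⟫ * ⟪e2 i, u⟫) = fun i => ((‖⟪e2 i, u⟫‖ ^ 2 : ℝ) : ℂ) := by
    funext i
    rw [← inner_conj_symm, RCLike.conj_mul]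
    norm_cast
  rw [heq] at h
  rw [inner_self_eq_norm_sq_to_K] at h
  have h2 : HasSum (fun i => ‖⟪e2 i, u⟫‖ ^ 2) (‖u‖ ^ 2) := by
    rw [← Complex.hasSum_ofReal]
    convert h using 2
    all_goals norm_cast
  exact ⟨h2.summable, h2.tsum_eq⟩

lemma pairs_summable (e2 : HilbertBasis ℕ ℂ H2) (c : ℕ → H2)
    (hc : Summable fun j => ‖c j‖ ^ 2) :
    Summable fun p : ℕ × ℕ => ‖⟪e2 p.1, c p.2⟫‖ ^ 2 := by
  have h1 : Summable fun p : ℕ × ℕ => ‖⟪e2 p.2, c p.1⟫‖ ^ 2 := by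
    rw [summable_prod_of_nonneg (fun p => by positivity)]
    refine ⟨fun j => (parseval_sq e2 (c j)).1, ?_⟩
    apply hc.congr
    intro j
    exact ((parseval_sq e2 (c j)).2).symm
  have h2 := (Equiv.prodComm ℕ ℕ).summable_iff.2 h1
  apply h2.congr
  intro p
  rfl

set_option maxHeartbeats 2000000

lemma trace_shift (e2 : HilbertBasis ℕ ℂ H2) (M S : H2 →L[ℂ] H2)
    (hS : adjoint S = S) (hsum : Summable fun i => ‖S (e2 i)‖ ^ 2) :
    ∑' i, ⟪e2 i, M (S (S (e2 i)))⟫ = ∑' i, ⟪S (e2 i), M (S (e2 i))⟫ := by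
  set A : H2 →L[ℂ] H2 := M * S with hA
  have hAapp : ∀ x, A x = M (S x) := fun x => rfl
  set F : ℕ × ℕ → ℂ := fun p => ⟪e2 p.1, A (e2 p.2)⟫ * ⟪S (e2 p.2), e2 p.1⟫ with hF
  have hsum1 : Summable fun j => ‖A (e2 j)‖ ^ 2 := by
    apply Summable.of_nonneg_of_le (fun j => by positivity) (fun j => ?_)
      (hsum.mul_left (‖M‖ ^ 2))
    rw [hAapp]
    calc ‖M (S (e2 j))‖ ^ 2 ≤ (‖M‖ * ‖S (e2 j)‖) ^ 2 := by
          have := M.le_opNorm (S (e2 j))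
          nlinarith [norm_nonneg (M (S (e2 j))), norm_nonneg (S (e2 j)), norm_nonneg M]
      _ = ‖M‖ ^ 2 * ‖S (e2 j)‖ ^ 2 := by ring
  have hg1 : Summable fun p : ℕ × ℕ => ‖⟪e2 p.1, A (e2 p.2)⟫‖ ^ 2 :=
    pairs_summable e2 (fun j => A (e2 j)) hsum1
  have hg2 : Summable fun p : ℕ × ℕ => ‖⟪e2 p.1, S (e2 p.2)⟫‖ ^ 2 :=
    pairs_summable e2 (fun j => S (e2 j)) hsum
  have hFs : Summable F := by
    apply Summable.of_norm
    apply Summable.of_nonneg_of_le (fun p => norm_nonneg _) (fun p => ?_)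
      (((hg1.add hg2).div_const 2))
    have h1 : ‖F p‖ = ‖⟪e2 p.1, A (e2 p.2)⟫‖ * ‖⟪e2 p.1, S (e2 p.2)⟫‖ := by
      rw [hF, norm_mul, norm_inner_symm (S (e2 p.2))]
    rw [h1]
    nlinarith [sq_nonneg (‖⟪e2 p.1, A (e2 p.2)⟫‖ - ‖⟪e2 p.1, S (e2 p.2)⟫‖),
      norm_nonneg (⟪e2 p.1, A (e2 p.2)⟫), norm_nonneg (⟪e2 p.1, S (e2 p.2)⟫)]
  have hL : ∀ i, ⟪e2 i, M (S (S (e2 i)))⟫ = ∑' j, F (i, j) := by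
    intro i
    have h1 : ⟪e2 i, M (S (S (e2 i)))⟫ = ⟪adjoint A (e2 i), S (e2 i)⟫ := by
      rw [adjoint_inner_left, hAapp]
    rw [h1, ← e2.tsum_inner_mul_inner (adjoint A (e2 i)) (S (e2 i))]
    apply tsum_congr
    intro j
    rw [adjoint_inner_left]
    congr 1
    conv_rhs => rw [← hS]
    rw [adjoint_inner_left]
  have hR : ∀ i, ⟪S (e2 i), M (S (e2 i))⟫ = ∑' j, F (j, i) := by
    intro i
    rw [show M (S (e2 i)) = A (e2 i) from rfl,
      ← e2.tsum_inner_mul_inner (S (e2 i)) (A (e2 i))]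
    apply tsum_congr
    intro j
    rw [hF]
    ring
  have hGs : Summable fun p : ℕ × ℕ => F (p.2, p.1) := by
    have := (Equiv.prodComm ℕ ℕ).summable_iff.2 hFs
    apply this.congr
    intro p
    rfl
  calc ∑' i, ⟪e2 i, M (S (S (e2 i)))⟫ = ∑' i, ∑' j, F (i, j) := tsum_congr hL
    _ = ∑' p : ℕ × ℕ, F p := (Summable.tsum_prod' hFs hFs.prod_factor).symm
    _ = ∑' p : ℕ × ℕ, F (p.2, p.1) := by
        rw [← (Equiv.prodComm ℕ ℕ).tsum_eq F]
        apply tsum_congr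
        intro p
        rfl
    _ = ∑' i, ∑' j, F (j, i) := Summable.tsum_prod' hGs hGs.prod_factor
    _ = ∑' i, ⟪S (e2 i), M (S (e2 i))⟫ := (tsum_congr hR).symm

end Helpers

set_option maxHeartbeats 1000000

theorem p_condition_cross_term_bound {H H2 : Type*}
    [NormedAddCommGroup H] [InnerProductSpace ℂ H] [CompleteSpace H]
    [NormedAddCommGroup H2] [InnerProductSpace ℂ H2] [CompleteSpace H2]
    (e : HilbertBasis ℕ ℂ H) (e2 : HilbertBasis ℕ ℂ H2)
    (T : HilbertTensor H H2)
    (γ : H →L[ℂ] H) (Γ : H2 →L[ℂ] H2) (N : ℕ)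
    -- admissibility of (γ, Γ)
    (hγpos : γ.IsPositive) (hγle1 : (1 - γ).IsPositive)
    (hγtc : IsTraceClass e γ) (hγtr : trB e γ = (N : ℂ))
    (hΓtc : IsTraceClass e2 Γ)
    (hex1 : T.ex * Γ = -Γ) (hex2 : Γ * T.ex = -Γ)
    -- P-condition
    (hPcond : Γ.IsPositive)
    -- X an orthogonal projection on H
    (X : H →L[ℂ] H) (hX : IsSelfAdjoint X) (hXidem : X * X = X)
    -- P is the spectral projection of γ onto eigenvalues > 1/2 (P⊥ = 1 - P);
    -- `e` is an orthonormal eigenbasis of γ with eigenvalues `lam`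
    (lam : ℕ → ℝ) (heig : ∀ k, γ (e k) = (lam k : ℂ) • e k)
    (P : H →L[ℂ] H) (hPdef : ∀ k, P (e k) = if 1/2 < lam k then (e k : H) else 0) :
    (‖trB e2 (T.map ((1 - P) * X * P) (P * X * (1 - P)) * Γ)‖ : ℂ) ≤ trB e2 (T.map (P * X * P) ((1 - P) * X * (1 - P)) * Γ) := by
  classical
  have he_dense : Dense (↑(Submodule.span ℂ (Set.range e)) : Set H) :=
    Submodule.dense_iff_topologicalClosure_eq_top.mpr e.dense_span
  have horth := e.orthonormal
  -- P is a self-adjoint projection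
  have hPP : ∀ j k, (inner ℂ (e j) (P (e k)) : ℂ) = inner ℂ (P (e j)) (e k) := by
    intro j k
    rw [hPdef, hPdef]
    by_cases hj : 1/2 < lam j <;> by_cases hk : 1/2 < lam k
    · rw [if_pos hj, if_pos hk]
    · have hjk : j ≠ k := fun h => hk (h ▸ hj)
      rw [if_pos hj, if_neg hk, inner_zero_right, horth.2 hjk]
    · have hjk : j ≠ k := fun h => hj (h ▸ hk)
      rw [if_neg hj, if_pos hk, inner_zero_left, horth.2 hjk]
    · rw [if_neg hj, if_neg hk, inner_zero_right, inner_zero_left]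
  have hPadj : adjoint P = P := by
    apply myext_op he_dense
    rintro x ⟨k, rfl⟩
    apply myext_inner he_dense
    rintro y ⟨j, rfl⟩
    rw [adjoint_inner_right]
    exact (hPP j k).symm
  have hadj_mul : ∀ A B : H →L[ℂ] H, adjoint (A * B) = adjoint B * adjoint A := fun A B => by
    rw [← star_eq_adjoint, ← star_eq_adjoint, ← star_eq_adjoint, star_mul]
  have hXadj : adjoint X = X := by rw [← star_eq_adjoint]; exact hX
  have h1Padj : adjoint (1 - P) = 1 - P := by
    rw [← star_eq_adjoint, star_sub, star_one, star_eq_adjoint, hPadj]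
  set C : H →L[ℂ] H := X * P with hC
  set D : H →L[ℂ] H := X * (1 - P) with hD
  set K₁ : H2 →L[ℂ] H2 := T.map C D with hK₁
  set K₂ : H2 →L[ℂ] H2 := T.map D C with hK₂
  have hCadj : adjoint C = P * X := by rw [hC, hadj_mul, hPadj, hXadj]
  have hDadj : adjoint D = (1 - P) * X := by rw [hD, hadj_mul, h1Padj, hXadj]
  have hXmid : ∀ A B : H →L[ℂ] H, (A * X) * (X * B) = A * X * B := fun A B => by
    rw [mul_assoc A X (X * B), ← mul_assoc X X B, hXidem, ← mul_assoc]
  have hcrossop : T.map ((1 - P) * X * P) (P * X * (1 - P)) = adjoint K₂ * K₁ := by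
    rw [hK₂, T_adjoint_map, hDadj, hCadj, hK₁, T_map_mul, hC, hD, hXmid, hXmid]
  have hrhsop : T.map (P * X * P) ((1 - P) * X * (1 - P)) = adjoint K₁ * K₁ := by
    rw [hK₁, T_adjoint_map, hDadj, hCadj, T_map_mul, hC, hD, hXmid, hXmid]
  -- the square root of Γ
  have hΓ0 : (0 : H2 →L[ℂ] H2) ≤ Γ := (ContinuousLinearMap.nonneg_iff_isPositive Γ).2 hPcond
  obtain ⟨S, hSadj, hSS⟩ : ∃ S : H2 →L[ℂ] H2, adjoint S = S ∧ S * S = Γ := by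
    refine ⟨CFC.sqrt Γ, ?_, CFC.sqrt_mul_sqrt_self Γ hΓ0⟩
    rw [← star_eq_adjoint]
    exact IsSelfAdjoint.of_nonneg (CFC.sqrt_nonneg Γ)
  have hSsa : IsSelfAdjoint S := by rw [IsSelfAdjoint, star_eq_adjoint]; exact hSadj
  have hΓapp : ∀ u, Γ u = S (S u) := fun u => by
    rw [← hSS]; rfl
  -- summability
  have hΓsum : Summable fun i => (inner ℂ (e2 i) (Γ (e2 i)) : ℂ) := by
    have hΓadj : adjoint Γ = Γ := by rw [← star_eq_adjoint]; exact hPcond.isSelfAdjoint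
    have h : CFC.sqrt (adjoint Γ * Γ) = Γ := by
      rw [hΓadj]; exact CFC.sqrt_mul_self Γ hΓ0
    unfold IsTraceClass at hΓtc
    rwa [h] at hΓtc
  have hdiag : ∀ u : H2, (inner ℂ u (Γ u) : ℂ) = ((‖S u‖ ^ 2 : ℝ) : ℂ) := by
    intro u
    have h5 := adjoint_inner_right S u (S u)
    rw [hSadj] at h5
    rw [hΓapp, h5, inner_self_eq_norm_sq_to_K]
    norm_cast
  have hsumS : Summable fun i => ‖S (e2 i)‖ ^ 2 := by
    rw [← Complex.summable_ofReal]
    apply hΓsum.congr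
    intro i
    rw [hdiag]
  -- exchange antisymmetry of S
  have hexadj := T_adjoint_ex T
  have hexstar : star T.ex = T.ex := by rw [star_eq_adjoint]; exact hexadj
  have hSex : S * T.ex = -S := by
    have key : ∀ u : H2, S (u + T.ex u) = 0 := by
      intro u
      have h0 : Γ (u + T.ex u) = 0 := by
        have h1 := DFunLike.congr_fun hex2 u
        simp only [ContinuousLinearMap.mul_apply, ContinuousLinearMap.neg_apply] at h1
        rw [map_add, h1]
        abel
      have h5 := adjoint_inner_right S (u + T.ex u) (S (u + T.ex u))
      rw [hSadj] at h5
      have h1 : (inner ℂ (S (u + T.ex u)) (S (u + T.ex u)) : ℂ) = 0 := by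
        rw [← h5, ← hΓapp, h0, inner_zero_right]
      exact inner_self_eq_zero.mp h1
    ext u
    have := key u
    rw [map_add] at this
    simp only [ContinuousLinearMap.mul_apply, ContinuousLinearMap.neg_apply]
    exact eq_neg_of_add_eq_zero_right this
  have hexS : T.ex * S = -S := by
    have h1 := congrArg star hSex
    rw [star_mul, star_neg, hexstar, hSsa] at h1
    exact h1
  have hexSv : ∀ u : H2, T.ex (S u) = -(S u) := fun u => by
    have := DFunLike.congr_fun hexS u
    simpa [ContinuousLinearMap.mul_apply, ContinuousLinearMap.neg_apply] using this
  -- K₂ = Ex K₁ Ex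
  have hK21 : ∀ w : H2, K₂ w = T.ex (K₁ (T.ex w)) := by
    have hop : T.ex * K₁ * T.ex = K₂ := T_ex_map T C D
    intro w
    have := DFunLike.congr_fun hop w
    simp only [ContinuousLinearMap.mul_apply] at this
    exact this.symm
  have hnorm : ∀ u : H2, ‖K₂ (S u)‖ = ‖K₁ (S u)‖ := by
    intro u
    rw [hK21, hexSv, map_neg, map_neg, norm_neg, T_ex_norm]
  -- the vectors
  set v : ℕ → H2 := fun i => K₁ (S (e2 i)) with hv
  have hv2 : Summable fun i => ‖v i‖ ^ 2 := by
    apply Summable.of_nonneg_of_le (fun i => by positivity) (fun i => ?_)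
      (hsumS.mul_left (‖K₁‖ ^ 2))
    calc ‖v i‖ ^ 2 ≤ (‖K₁‖ * ‖S (e2 i)‖) ^ 2 := by
          have := K₁.le_opNorm (S (e2 i))
          nlinarith [norm_nonneg (v i), norm_nonneg (S (e2 i)), norm_nonneg K₁]
      _ = ‖K₁‖ ^ 2 * ‖S (e2 i)‖ ^ 2 := by ring
  -- trace computations
  have htr : ∀ Q : H2 →L[ℂ] H2,
      trB e2 (Q * Γ) = ∑' i, (inner ℂ (S (e2 i)) (Q (S (e2 i))) : ℂ) := by
    intro Q
    unfold trB
    calc ∑' i, (inner ℂ (e2 i) ((Q * Γ) (e2 i)) : ℂ)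
        = ∑' i, (inner ℂ (e2 i) (Q (S (S (e2 i)))) : ℂ) := by
          apply tsum_congr; intro i
          rw [ContinuousLinearMap.mul_apply, hΓapp]
      _ = ∑' i, (inner ℂ (S (e2 i)) (Q (S (e2 i))) : ℂ) := trace_shift e2 Q S hSadj hsumS
  have hLtr : trB e2 (T.map ((1 - P) * X * P) (P * X * (1 - P)) * Γ)
      = ∑' i, (inner ℂ (K₂ (S (e2 i))) (v i) : ℂ) := by
    rw [hcrossop, htr]
    apply tsum_congr; intro i
    rw [ContinuousLinearMap.mul_apply, adjoint_inner_right]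
  have hRtr : trB e2 (T.map (P * X * P) ((1 - P) * X * (1 - P)) * Γ)
      = (((∑' i, ‖v i‖ ^ 2) : ℝ) : ℂ) := by
    rw [hrhsop, htr, Complex.ofReal_tsum]
    apply tsum_congr; intro i
    rw [ContinuousLinearMap.mul_apply, adjoint_inner_right, inner_self_eq_norm_sq_to_K]
    norm_cast
  rw [hLtr, hRtr]
  -- the Cauchy-Schwarz estimate
  have hb : ∀ i, ‖(inner ℂ (K₂ (S (e2 i))) (v i) : ℂ)‖ ≤ ‖v i‖ ^ 2 := by
    intro i
    calc ‖(inner ℂ (K₂ (S (e2 i))) (v i) : ℂ)‖ ≤ ‖K₂ (S (e2 i))‖ * ‖v i‖ :=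
          norm_inner_le_norm _ _
      _ = ‖v i‖ ^ 2 := by rw [hnorm]; ring
  have hsn : Summable fun i => ‖(inner ℂ (K₂ (S (e2 i))) (v i) : ℂ)‖ :=
    Summable.of_nonneg_of_le (fun i => norm_nonneg _) hb hv2
  have key : ‖∑' i, (inner ℂ (K₂ (S (e2 i))) (v i) : ℂ)‖ ≤ ∑' i, ‖v i‖ ^ 2 :=
    calc ‖∑' i, (inner ℂ (K₂ (S (e2 i))) (v i) : ℂ)‖
        ≤ ∑' i, ‖(inner ℂ (K₂ (S (e2 i))) (v i) : ℂ)‖ := norm_tsum_le_tsum_norm hsn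
      _ ≤ ∑' i, ‖v i‖ ^ 2 := Summable.tsum_le_tsum hb hsn hv2
  exact Complex.real_le_real.mpr key
end
end

section
/- Let γ be a trace-class operator on ℋ with 0 ≤ γ ≤ 1, let X be an orthogonal projection on ℋ, and let P, P^⊥ be the spectral projections of γ for eigenvalues > 1/2 and ≤ 1/2. Then tr(P^⊥XPγPXP^⊥) ≤ tr(Xγ) and tr(PXP^⊥γP^⊥XP) ≤ 4·tr(Xγ)·tr(X(γ−γ²)). -/
open scoped ComplexOrder
open ContinuousLinearMap

noncomputable section

set_option linter.unusedSectionVars false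
set_option maxHeartbeats 1000000
set_option synthInstance.maxHeartbeats 400000

lemma diag_row {H : Type*} [NormedAddCommGroup H] [InnerProductSpace ℂ H]
    [CompleteSpace H] (e : HilbertBasis ℕ ℂ H) (T : H →L[ℂ] H) (μ : ℕ → ℂ)
    (hT : ∀ j, T (e j) = μ j • e j) (w : H) (k : ℕ) :
    (inner ℂ (e k) (T w) : ℂ) = μ k * inner ℂ (e k) w := by
  have h1 : HasSum (fun j => e.repr w j • e j) w := e.hasSum_repr w
  have h2 := (h1.mapL T).mapL (innerSL ℂ (e k))
  have h3 : (fun j => (innerSL ℂ (e k)) (T (e.repr w j • e j)))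
      = fun j => if j = k then μ k * inner ℂ (e k) w else 0 := by
    funext j
    simp only [innerSL_apply_apply, map_smul, hT j, inner_smul_right]
    rcases eq_or_ne j k with rfl | hjk
    · simp [orthonormal_iff_ite.mp e.orthonormal, e.repr_apply_apply, e.orthonormal.1 j]
      ring
    · simp [orthonormal_iff_ite.mp e.orthonormal, hjk, Ne.symm hjk]
  rw [h3] at h2
  have h4 := hasSum_ite_eq k (μ k * (inner ℂ (e k) w : ℂ))
  simpa [innerSL_apply_apply] using h2.unique h4

lemma tsum_ofReal' {f : ℕ → ℝ} (hf : Summable f) :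
    ∑' k, ((f k : ℂ)) = ((∑' k, f k : ℝ) : ℂ) := by
  have := hf.hasSum.mapL Complex.ofRealCLM
  simpa using this.tsum_eq

lemma hasSum_ofReal_iff' {f : ℕ → ℝ} (h : Summable f) {z : ℂ}
    (hz : HasSum (fun k => ((f k : ℂ))) z) : z = ((∑' k, f k : ℝ) : ℂ) := by
  have := h.hasSum.mapL Complex.ofRealCLM
  simp only [Complex.ofRealCLM_apply] at this
  exact hz.unique this

theorem exchange_term_bounds {H : Type*} [NormedAddCommGroup H] [InnerProductSpace ℂ H] [CompleteSpace H]
    (e : HilbertBasis ℕ ℂ H) (γ : H →L[ℂ] H)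
    (hγpos : γ.IsPositive) (hγle1 : (1 - γ).IsPositive) (hγtc : IsTraceClass e γ)
    (X : H →L[ℂ] H) (hX : IsSelfAdjoint X) (hXidem : X * X = X)
    -- P is the spectral projection of γ onto eigenvalues > 1/2 (P⊥ = 1 - P);
    -- `e` is an orthonormal eigenbasis of γ with eigenvalues `lam`
    (lam : ℕ → ℝ) (heig : ∀ k, γ (e k) = (lam k : ℂ) • e k)
    (P : H →L[ℂ] H) (hPdef : ∀ k, P (e k) = if 1/2 < lam k then (e k : H) else 0) :
    trB e ((1 - P) * X * P * γ * P * X * (1 - P)) ≤ trB e (X * γ)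
    ∧ trB e (P * X * (1 - P) * γ * (1 - P) * X * P) ≤
        4 * trB e (X * γ) * trB e (X * (γ - γ * γ)) := by
  classical
  have hγtc2 : Summable fun i => (inner ℂ (e i) (CFC.sqrt (adjoint γ * γ) (e i)) : ℂ) := hγtc
  -- basic data
  set c : ℕ → ℝ := fun k => if 1/2 < lam k then 1 else 0 with hc
  have hc0 : ∀ k, 0 ≤ c k := fun k => by simp only [hc]; split <;> norm_num
  have hc1 : ∀ k, c k ≤ 1 := fun k => by simp only [hc]; split <;> norm_num
  have hPe : ∀ j, P (e j) = ((c j : ℂ)) • e j := by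
    intro j; rw [hPdef]; simp only [hc]; split <;> simp
  have hProw : ∀ (w : H) k, (inner ℂ (e k) (P w) : ℂ) = (c k : ℂ) * inner ℂ (e k) w :=
    fun w k => diag_row e P (fun j => (c j : ℂ)) hPe w k
  have hγrow : ∀ (w : H) k, (inner ℂ (e k) (γ w) : ℂ) = (lam k : ℂ) * inner ℂ (e k) w :=
    fun w k => diag_row e γ (fun j => (lam j : ℂ)) heig w k
  have h1Prow : ∀ (w : H) k, (inner ℂ (e k) ((1 - P) w) : ℂ) = (1 - (c k : ℂ)) * inner ℂ (e k) w := by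
    intro w k
    simp only [ContinuousLinearMap.sub_apply, ContinuousLinearMap.one_apply, inner_sub_right,
      hProw]
    ring
  have h1Pe : ∀ j, (1 - P) (e j) = ((1 : ℂ) - (c j : ℂ)) • e j := by
    intro j
    simp only [ContinuousLinearMap.sub_apply, ContinuousLinearMap.one_apply, hPe, sub_smul,
      one_smul]
  have hXmove : ∀ u w : H, (inner ℂ u (X w) : ℂ) = inner ℂ (X u) w := by
    intro u w
    have hadj : ContinuousLinearMap.adjoint X = X := by
      rw [← ContinuousLinearMap.star_eq_adjoint]; exact hX
    conv_rhs => rw [← hadj]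
    rw [ContinuousLinearMap.adjoint_inner_left]
  have hXX : ∀ y, X (X y) = X y := by
    intro y
    have := congrArg (fun T : H →L[ℂ] H => T y) hXidem
    simpa [ContinuousLinearMap.mul_apply] using this
  -- norms and eigenvalue bounds
  have hnorme : ∀ k, ‖(e k : H)‖ = 1 := fun k => e.orthonormal.1 k
  set s : ℕ → ℝ := fun k => ‖X (e k)‖ ^ 2 with hs
  have hs0 : ∀ k, 0 ≤ s k := fun k => by positivity
  have hsinner : ∀ k, (inner ℂ (e k) (X (e k)) : ℂ) = ((s k : ℝ) : ℂ) := by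
    intro k
    rw [← hXX (e k), hXmove, inner_self_eq_norm_sq_to_K]
    push_cast [hs]
    norm_num
  have hs1 : ∀ k, s k ≤ 1 := by
    intro k
    have h1 : ‖(inner ℂ (e k) (X (e k)) : ℂ)‖ ≤ ‖(e k : H)‖ * ‖X (e k)‖ := norm_inner_le_norm _ _
    rw [hsinner k, hnorme, one_mul] at h1
    have h2 : ‖((s k : ℝ) : ℂ)‖ = s k := by
      simp [Complex.norm_real, abs_of_nonneg (hs0 k)]
    rw [h2] at h1
    have h3 : s k = ‖X (e k)‖ ^ 2 := rfl
    nlinarith [norm_nonneg (X (e k)), hs0 k]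
  have hlam0 : ∀ k, 0 ≤ lam k := by
    intro k
    have h := hγpos.2 (e k)
    have h2 : (inner ℂ (γ (e k)) (e k) : ℂ) = ((lam k : ℝ) : ℂ) := by
      rw [heig, inner_smul_left, inner_self_eq_norm_sq_to_K, hnorme]
      simp [Complex.conj_ofReal]
    simp only [ContinuousLinearMap.reApplyInnerSelf, h2] at h
    simpa using h
  have hlam1 : ∀ k, lam k ≤ 1 := by
    intro k
    have h := hγle1.2 (e k)
    have h2 : (inner ℂ ((1 - γ) (e k)) (e k) : ℂ) = (((1 - lam k : ℝ)) : ℂ) := by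
      simp only [ContinuousLinearMap.sub_apply, ContinuousLinearMap.one_apply, heig,
        inner_sub_left, inner_smul_left, inner_self_eq_norm_sq_to_K, hnorme]
      simp [Complex.conj_ofReal]
    simp only [ContinuousLinearMap.reApplyInnerSelf, h2] at h
    simp at h
    linarith
  -- summability of eigenvalues
  have hadjγ : ContinuousLinearMap.adjoint γ = γ := by
    rw [← ContinuousLinearMap.star_eq_adjoint]; exact hγpos.isSelfAdjoint
  have hγnn : (0 : H →L[ℂ] H) ≤ γ := (ContinuousLinearMap.nonneg_iff_isPositive γ).mpr hγpos
  have hsqrt : CFC.sqrt (adjoint γ * γ) = γ := by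
    rw [hadjγ]
    exact CFC.sqrt_mul_self γ hγnn
  have hlamsum : Summable lam := by
    have h1 : (fun i => (inner ℂ (e i) (CFC.sqrt (adjoint γ * γ) (e i)) : ℂ))
        = fun i => ((lam i : ℝ) : ℂ) := by
      funext i
      rw [hsqrt, heig, inner_smul_right, inner_self_eq_norm_sq_to_K, hnorme]
      simp
    rw [h1] at hγtc2
    have h2 := (hγtc2.hasSum.mapL Complex.reCLM).summable
    simpa using h2
  -- matrix elements
  set M : ℕ → ℕ → ℝ := fun j k => ‖(inner ℂ (e j) (X (e k)) : ℂ)‖ ^ 2 with hMdef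
  have hM0 : ∀ j k, 0 ≤ M j k := fun j k => by positivity
  have hxx : ∀ j k, (starRingEnd ℂ) (inner ℂ (e j) (X (e k)) : ℂ) * (inner ℂ (e j) (X (e k)) : ℂ)
      = ((M j k : ℝ) : ℂ) := by
    intro j k
    rw [RCLike.conj_mul]
    norm_cast
  have hParC : ∀ k, HasSum (fun j => ((M j k : ℝ) : ℂ)) ((s k : ℝ) : ℂ) := by
    intro k
    have h1 := e.hasSum_inner_mul_inner (X (e k)) (X (e k))
    have h2 : (fun j => (inner ℂ (X (e k)) (e j) : ℂ) * (inner ℂ (e j) (X (e k)) : ℂ))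
        = fun j => ((M j k : ℝ) : ℂ) := by
      funext j
      rw [← inner_conj_symm (X (e k)) (e j), hxx]
    rw [h2, inner_self_eq_norm_sq_to_K] at h1
    convert h1 using 1
    norm_cast
    exact Complex.ofReal_pow _ _
  have hPar : ∀ k, HasSum (fun j => M j k) (s k) := by
    intro k
    have := (hParC k).mapL Complex.reCLM
    simpa using this
  have hMsymm : ∀ j k, M j k = M k j := by
    intro j k
    have h1 : (inner ℂ (e j) (X (e k)) : ℂ) = inner ℂ (X (e j)) (e k) := hXmove _ _
    have h2 : (inner ℂ (X (e j)) (e k) : ℂ) = (starRingEnd ℂ) (inner ℂ (e k) (X (e j)) : ℂ) :=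
      (inner_conj_symm _ _).symm
    simp only [hMdef, h1, h2, RCLike.norm_conj]
  have hMle : ∀ j k, M j k ≤ s j * s k := by
    intro j k
    have h1 : (inner ℂ (e j) (X (e k)) : ℂ) = inner ℂ (X (e j)) (X (e k)) := by
      conv_lhs => rw [← hXX (e k)]
      exact hXmove _ _
    have h2 : ‖(inner ℂ (e j) (X (e k)) : ℂ)‖ ≤ ‖X (e j)‖ * ‖X (e k)‖ := by
      rw [h1]; exact norm_inner_le_norm _ _
    have h3 := pow_le_pow_left₀ (norm_nonneg _) h2 2
    rw [mul_pow] at h3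
    exact h3
  -- the sequences a and b
  set bb : ℕ → ℝ := fun k => lam k * s k with hbdef
  set aa : ℕ → ℝ := fun k => lam k * (1 - lam k) * s k with hadef
  have hb0 : ∀ k, 0 ≤ bb k := fun k => mul_nonneg (hlam0 k) (hs0 k)
  have ha0 : ∀ k, 0 ≤ aa k :=
    fun k => mul_nonneg (mul_nonneg (hlam0 k) (by linarith [hlam1 k])) (hs0 k)
  have hbsum : Summable bb := by
    refine Summable.of_nonneg_of_le hb0 (fun k => ?_) hlamsum
    simp only [hbdef]
    nlinarith [hs1 k, hlam0 k, hs0 k]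
  have hasum : Summable aa := by
    refine Summable.of_nonneg_of_le ha0 (fun k => ?_) hlamsum
    simp only [hadef]
    have h2 : (1 - lam k) * s k ≤ 1 :=
      mul_le_one₀ (by linarith [hlam0 k]) (hs0 k) (hs1 k)
    nlinarith [mul_nonneg (hlam0 k) (sub_nonneg.mpr h2)]
  -- trB of the right-hand sides
  have htrXγ : trB e (X * γ) = ((∑' k, bb k : ℝ) : ℂ) := by
    have h1 : (fun k => (inner ℂ (e k) ((X * γ) (e k)) : ℂ)) = fun k => ((bb k : ℝ) : ℂ) := by
      funext k
      simp only [ContinuousLinearMap.mul_apply, heig, map_smul, inner_smul_right, hsinner]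
      push_cast [hbdef]
      ring
    rw [trB, h1]
    exact tsum_ofReal' hbsum
  have htrXγ2 : trB e (X * (γ - γ * γ)) = ((∑' k, aa k : ℝ) : ℂ) := by
    have h1 : (fun k => (inner ℂ (e k) ((X * (γ - γ * γ)) (e k)) : ℂ))
        = fun k => ((aa k : ℝ) : ℂ) := by
      funext k
      simp only [ContinuousLinearMap.mul_apply, ContinuousLinearMap.sub_apply, heig, map_smul,
        map_sub, inner_sub_right, inner_smul_right, hsinner]
      push_cast [hadef]
      ring
    rw [trB, h1]
    exact tsum_ofReal' hasum
  -- the double-indexed families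
  set G : ℕ × ℕ → ℝ := fun p => lam p.1 * M p.1 p.2 with hGdef
  have hG0 : ∀ p, 0 ≤ G p := fun p => mul_nonneg (hlam0 _) (hM0 _ _)
  have hGrow : ∀ j, HasSum (fun k => G (j, k)) (bb j) := by
    intro j
    have h1 : (fun k => G (j, k)) = fun k => lam j * M k j := by
      funext k; simp only [hGdef]; rw [hMsymm]
    rw [h1, hbdef]
    exact (hPar j).mul_left (lam j)
  have hGslice : ∀ k, Summable fun j => G (j, k) := by
    intro k
    refine Summable.of_nonneg_of_le (fun j => hG0 _) (fun j => ?_) (hPar k).summable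
    have h1 : lam j * M j k ≤ 1 * M j k :=
      mul_le_mul_of_nonneg_right (hlam1 j) (hM0 j k)
    simpa using h1
  have hGsum : Summable G := by
    refine (summable_prod_of_nonneg hG0).mpr ⟨fun j => (hGrow j).summable, ?_⟩
    have h1 : (fun j => ∑' k, G (j, k)) = bb := funext fun j => (hGrow j).tsum_eq
    rw [h1]; exact hbsum
  have hGtot : ∑' p, G p = ∑' j, bb j := by
    rw [Summable.tsum_prod hGsum]
    exact tsum_congr fun j => (hGrow j).tsum_eq
  have hGswap : Summable (fun p : ℕ × ℕ => G p.swap) := hGsum.prod_symm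
  have hgmarg : Summable (fun k => ∑' j, G (j, k)) := hGswap.prod
  have hswtot : ∑' k, ∑' j, G (j, k) = ∑' p, G p := by
    have h1 := Summable.tsum_prod hGswap
    have h2 : ∑' p : ℕ × ℕ, G p.swap = ∑' p, G p := by
      have := (Equiv.prodComm ℕ ℕ).tsum_eq G
      simpa [Equiv.prodComm] using this
    rw [← h2, h1]
    rfl
  -- first exchange term
  set F1 : ℕ × ℕ → ℝ := fun p => (1 - c p.2) ^ 2 * c p.1 ^ 2 * (lam p.1 * M p.1 p.2)
    with hF1def
  have hF10 : ∀ p, 0 ≤ F1 p :=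
    fun p => mul_nonneg (mul_nonneg (sq_nonneg _) (sq_nonneg _))
      (mul_nonneg (hlam0 _) (hM0 _ _))
  have hF1le : ∀ p, F1 p ≤ G p := by
    intro p
    have h1 : 0 ≤ lam p.1 * M p.1 p.2 := mul_nonneg (hlam0 _) (hM0 _ _)
    calc F1 p = (1 - c p.2) ^ 2 * c p.1 ^ 2 * (lam p.1 * M p.1 p.2) := rfl
      _ ≤ 1 * (lam p.1 * M p.1 p.2) := by
          refine mul_le_mul_of_nonneg_right ?_ h1
          have h2 : (1 - c p.2) ^ 2 ≤ 1 := by nlinarith [hc0 p.2, hc1 p.2]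
          have h3 : c p.1 ^ 2 ≤ 1 := by nlinarith [hc0 p.1, hc1 p.1]
          exact mul_le_one₀ h2 (sq_nonneg _) h3
      _ = G p := by rw [one_mul]
  have key1 : ∀ k, HasSum (fun j => ((F1 (j, k) : ℝ) : ℂ))
      (inner ℂ (e k) (((1 - P) * X * P * γ * P * X * (1 - P)) (e k)) : ℂ) := by
    intro k
    have hdiag : (inner ℂ (e k) (((1 - P) * X * P * γ * P * X * (1 - P)) (e k)) : ℂ)
        = ((1 - (c k : ℂ)) * (1 - (c k : ℂ))) *
            inner ℂ (X (e k)) (P (γ (P (X (e k))))) := by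
      simp only [ContinuousLinearMap.mul_apply]
      rw [h1Prow, h1Pe k]
      simp only [map_smul, inner_smul_right]
      rw [hXmove]
      ring
    have hterm : ∀ j, (inner ℂ (X (e k)) (e j) : ℂ) * (inner ℂ (e j) (P (γ (P (X (e k))))) : ℂ)
        = ((c j : ℂ)) ^ 2 * (lam j : ℂ) * ((M j k : ℝ) : ℂ) := by
      intro j
      rw [hProw, hγrow, hProw, ← inner_conj_symm (X (e k)) (e j)]
      calc (starRingEnd ℂ) (inner ℂ (e j) (X (e k)) : ℂ) *
            ((c j : ℂ) * ((lam j : ℂ) * ((c j : ℂ) * (inner ℂ (e j) (X (e k)) : ℂ))))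
          = (c j : ℂ) ^ 2 * (lam j : ℂ) *
              ((starRingEnd ℂ) (inner ℂ (e j) (X (e k)) : ℂ) * (inner ℂ (e j) (X (e k)) : ℂ)) := by
            ring
        _ = (c j : ℂ) ^ 2 * (lam j : ℂ) * ((M j k : ℝ) : ℂ) := by rw [hxx j k]
    have hbase := e.hasSum_inner_mul_inner (X (e k)) (P (γ (P (X (e k)))))
    rw [show (fun j => (inner ℂ (X (e k)) (e j) : ℂ) * (inner ℂ (e j) (P (γ (P (X (e k))))) : ℂ))
        = fun j => ((c j : ℂ)) ^ 2 * (lam j : ℂ) * ((M j k : ℝ) : ℂ) from funext hterm] at hbase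
    have h3 := hbase.mul_left ((1 - (c k : ℂ)) * (1 - (c k : ℂ)))
    rw [← hdiag] at h3
    have h4 : (fun j => ((F1 (j, k) : ℝ) : ℂ))
        = fun j => ((1 - (c k : ℂ)) * (1 - (c k : ℂ))) *
            (((c j : ℂ)) ^ 2 * (lam j : ℂ) * ((M j k : ℝ) : ℂ)) := by
      funext j
      simp only [hF1def]
      push_cast
      ring
    rw [h4]
    exact h3
  have hF1slice : ∀ k, Summable fun j => F1 (j, k) :=
    fun k => Summable.of_nonneg_of_le (fun j => hF10 _) (fun j => hF1le _) (hGslice k)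
  have hdiagval1 : ∀ k, (inner ℂ (e k) (((1 - P) * X * P * γ * P * X * (1 - P)) (e k)) : ℂ)
      = ((∑' j, F1 (j, k) : ℝ) : ℂ) :=
    fun k => hasSum_ofReal_iff' (hF1slice k) (key1 k)
  set t1 : ℕ → ℝ := fun k => ∑' j, F1 (j, k) with ht1def
  have ht10 : ∀ k, 0 ≤ t1 k := fun k => tsum_nonneg fun j => hF10 _
  have ht1le : ∀ k, t1 k ≤ ∑' j, G (j, k) :=
    fun k => Summable.tsum_le_tsum (fun j => hF1le _) (hF1slice k) (hGslice k)
  have ht1sum : Summable t1 := Summable.of_nonneg_of_le ht10 ht1le hgmarg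
  have htrA1 : trB e ((1 - P) * X * P * γ * P * X * (1 - P)) = ((∑' k, t1 k : ℝ) : ℂ) := by
    rw [trB]
    rw [show (fun k => (inner ℂ (e k) (((1 - P) * X * P * γ * P * X * (1 - P)) (e k)) : ℂ))
        = fun k => ((t1 k : ℝ) : ℂ) from funext hdiagval1]
    exact tsum_ofReal' ht1sum
  have hineq1 : (∑' k, t1 k) ≤ ∑' k, bb k := by
    calc (∑' k, t1 k) ≤ ∑' k, ∑' j, G (j, k) := Summable.tsum_le_tsum ht1le ht1sum hgmarg
      _ = ∑' p, G p := hswtot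
      _ = ∑' j, bb j := hGtot
  -- second exchange term
  set Q : ℕ × ℕ → ℝ := fun p => 4 * (aa p.1 * bb p.2) with hQdef
  have hQ0 : ∀ p, 0 ≤ Q p :=
    fun p => mul_nonneg (by norm_num) (mul_nonneg (ha0 _) (hb0 _))
  have hQsum : Summable Q := by
    have h1 : Summable fun p : ℕ × ℕ => aa p.1 * bb p.2 :=
      hasum.mul_of_nonneg hbsum (fun k => ha0 k) (fun k => hb0 k)
    simpa [hQdef] using h1.mul_left 4
  set F2 : ℕ × ℕ → ℝ := fun p => c p.2 ^ 2 * (1 - c p.1) ^ 2 * (lam p.1 * M p.1 p.2)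
    with hF2def
  have hF20 : ∀ p, 0 ≤ F2 p :=
    fun p => mul_nonneg (mul_nonneg (sq_nonneg _) (sq_nonneg _))
      (mul_nonneg (hlam0 _) (hM0 _ _))
  have hF2leG : ∀ p, F2 p ≤ G p := by
    intro p
    have h1 : 0 ≤ lam p.1 * M p.1 p.2 := mul_nonneg (hlam0 _) (hM0 _ _)
    calc F2 p = c p.2 ^ 2 * (1 - c p.1) ^ 2 * (lam p.1 * M p.1 p.2) := rfl
      _ ≤ 1 * (lam p.1 * M p.1 p.2) := by
          refine mul_le_mul_of_nonneg_right ?_ h1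
          have h2 : c p.2 ^ 2 ≤ 1 := by nlinarith [hc0 p.2, hc1 p.2]
          have h3 : (1 - c p.1) ^ 2 ≤ 1 := by nlinarith [hc0 p.1, hc1 p.1]
          exact mul_le_one₀ h2 (sq_nonneg _) h3
      _ = G p := by rw [one_mul]
  have hF2le : ∀ p, F2 p ≤ Q p := by
    intro p
    rcases le_or_gt (lam p.2) (1/2) with h | h
    · have hck : c p.2 = 0 := by simp only [hc]; rw [if_neg (not_lt.mpr h)]
      have : F2 p = 0 := by simp [hF2def, hck]
      rw [this]; exact hQ0 p
    · have hck : c p.2 = 1 := by simp only [hc]; rw [if_pos h]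
      rcases le_or_gt (lam p.1) (1/2) with h' | h'
      · have hcj : c p.1 = 0 := by simp only [hc]; rw [if_neg (not_lt.mpr h')]
        have e2 : 1 ≤ 4 * (1 - lam p.1) * lam p.2 := by
          nlinarith [mul_nonneg (show (0:ℝ) ≤ 1/2 - lam p.1 by linarith)
            (show (0:ℝ) ≤ lam p.2 - 1/2 by linarith)]
        have e1 : lam p.1 * M p.1 p.2 ≤ lam p.1 * (s p.1 * s p.2) :=
          mul_le_mul_of_nonneg_left (hMle _ _) (hlam0 _)
        have e3 : lam p.1 * (s p.1 * s p.2)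
            ≤ 4 * (1 - lam p.1) * lam p.2 * (lam p.1 * (s p.1 * s p.2)) := by
          refine le_mul_of_one_le_left ?_ e2
          exact mul_nonneg (hlam0 _) (mul_nonneg (hs0 _) (hs0 _))
        calc F2 p = lam p.1 * M p.1 p.2 := by simp [hF2def, hcj, hck]
          _ ≤ lam p.1 * (s p.1 * s p.2) := e1
          _ ≤ 4 * (1 - lam p.1) * lam p.2 * (lam p.1 * (s p.1 * s p.2)) := e3
          _ = Q p := by simp only [hQdef, hadef, hbdef]; ring
      · have hcj : c p.1 = 1 := by simp only [hc]; rw [if_pos h']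
        have : F2 p = 0 := by simp [hF2def, hcj]
        rw [this]; exact hQ0 p
  have hF2sum : Summable F2 := Summable.of_nonneg_of_le hF20 hF2le hQsum
  have key2 : ∀ k, HasSum (fun j => ((F2 (j, k) : ℝ) : ℂ))
      (inner ℂ (e k) ((P * X * (1 - P) * γ * (1 - P) * X * P) (e k)) : ℂ) := by
    intro k
    have hdiag : (inner ℂ (e k) ((P * X * (1 - P) * γ * (1 - P) * X * P) (e k)) : ℂ)
        = ((c k : ℂ) * (c k : ℂ)) *
            inner ℂ (X (e k)) ((1 - P) (γ ((1 - P) (X (e k))))) := by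
      simp only [ContinuousLinearMap.mul_apply]
      rw [hProw, hPe k]
      simp only [map_smul, inner_smul_right]
      rw [hXmove]
      ring
    have hterm : ∀ j, (inner ℂ (X (e k)) (e j) : ℂ) *
          (inner ℂ (e j) ((1 - P) (γ ((1 - P) (X (e k))))) : ℂ)
        = (1 - (c j : ℂ)) ^ 2 * (lam j : ℂ) * ((M j k : ℝ) : ℂ) := by
      intro j
      rw [h1Prow, hγrow, h1Prow, ← inner_conj_symm (X (e k)) (e j)]
      calc (starRingEnd ℂ) (inner ℂ (e j) (X (e k)) : ℂ) *
            ((1 - (c j : ℂ)) * ((lam j : ℂ) * ((1 - (c j : ℂ)) * (inner ℂ (e j) (X (e k)) : ℂ))))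
          = (1 - (c j : ℂ)) ^ 2 * (lam j : ℂ) *
              ((starRingEnd ℂ) (inner ℂ (e j) (X (e k)) : ℂ) * (inner ℂ (e j) (X (e k)) : ℂ)) := by
            ring
        _ = (1 - (c j : ℂ)) ^ 2 * (lam j : ℂ) * ((M j k : ℝ) : ℂ) := by rw [hxx j k]
    have hbase := e.hasSum_inner_mul_inner (X (e k)) ((1 - P) (γ ((1 - P) (X (e k)))))
    rw [show (fun j => (inner ℂ (X (e k)) (e j) : ℂ) *
          (inner ℂ (e j) ((1 - P) (γ ((1 - P) (X (e k))))) : ℂ))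
        = fun j => (1 - (c j : ℂ)) ^ 2 * (lam j : ℂ) * ((M j k : ℝ) : ℂ) from funext hterm]
      at hbase
    have h3 := hbase.mul_left ((c k : ℂ) * (c k : ℂ))
    rw [← hdiag] at h3
    have h4 : (fun j => ((F2 (j, k) : ℝ) : ℂ))
        = fun j => ((c k : ℂ) * (c k : ℂ)) *
            ((1 - (c j : ℂ)) ^ 2 * (lam j : ℂ) * ((M j k : ℝ) : ℂ)) := by
      funext j
      simp only [hF2def]
      push_cast
      ring
    rw [h4]
    exact h3
  have hF2slice : ∀ k, Summable fun j => F2 (j, k) :=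
    fun k => Summable.of_nonneg_of_le (fun j => hF20 _) (fun j => hF2leG _) (hGslice k)
  have hdiagval2 : ∀ k, (inner ℂ (e k) ((P * X * (1 - P) * γ * (1 - P) * X * P) (e k)) : ℂ)
      = ((∑' j, F2 (j, k) : ℝ) : ℂ) :=
    fun k => hasSum_ofReal_iff' (hF2slice k) (key2 k)
  set t2 : ℕ → ℝ := fun k => ∑' j, F2 (j, k) with ht2def
  have ht20 : ∀ k, 0 ≤ t2 k := fun k => tsum_nonneg fun j => hF20 _
  have ht2le : ∀ k, t2 k ≤ ∑' j, G (j, k) :=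
    fun k => Summable.tsum_le_tsum (fun j => hF2leG _) (hF2slice k) (hGslice k)
  have ht2sum : Summable t2 := Summable.of_nonneg_of_le ht20 ht2le hgmarg
  have htrA2 : trB e (P * X * (1 - P) * γ * (1 - P) * X * P) = ((∑' k, t2 k : ℝ) : ℂ) := by
    rw [trB]
    rw [show (fun k => (inner ℂ (e k) ((P * X * (1 - P) * γ * (1 - P) * X * P) (e k)) : ℂ))
        = fun k => ((t2 k : ℝ) : ℂ) from funext hdiagval2]
    exact tsum_ofReal' ht2sum
  -- sum identities for the second bound
  have hF2swap : Summable (fun p : ℕ × ℕ => F2 p.swap) := hF2sum.prod_symm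
  have ht2tot : ∑' k, t2 k = ∑' p, F2 p := by
    have h1 := Summable.tsum_prod hF2swap
    have h2 : ∑' p : ℕ × ℕ, F2 p.swap = ∑' p, F2 p := by
      have := (Equiv.prodComm ℕ ℕ).tsum_eq F2
      simpa [Equiv.prodComm] using this
    rw [ht2def, ← h2, h1]
    rfl
  have hQtot : ∑' p, Q p = 4 * (∑' k, aa k) * (∑' k, bb k) := by
    calc ∑' p, Q p = ∑' j, ∑' k, (4 * aa j) * bb k := by
          rw [Summable.tsum_prod hQsum]
          exact tsum_congr fun j => tsum_congr fun k => by simp only [hQdef]; ring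
      _ = ∑' j, (4 * aa j) * ∑' k, bb k := tsum_congr fun j => tsum_mul_left
      _ = 4 * (∑' k, aa k) * (∑' k, bb k) := by rw [tsum_mul_right, tsum_mul_left]
  have hineq2 : (∑' k, t2 k) ≤ 4 * (∑' k, aa k) * (∑' k, bb k) := by
    rw [ht2tot, ← hQtot]
    exact Summable.tsum_le_tsum hF2le hF2sum hQsum
  -- conclusion
  constructor
  · rw [htrA1, htrXγ]
    exact Complex.real_le_real.mpr hineq1
  · rw [htrA2, htrXγ, htrXγ2]
    have : (4 : ℂ) * ((∑' k, bb k : ℝ) : ℂ) * ((∑' k, aa k : ℝ) : ℂ)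
        = (((4 * (∑' k, aa k) * (∑' k, bb k) : ℝ)) : ℂ) := by
      push_cast; ring
    rw [this]
    exact Complex.real_le_real.mpr hineq2
end
end
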